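/- Let p be a prime and let U be a nonempty bounded open subset of ℚ_p. Then U can be written as the union of an at most countable family of pairwise disjoint closed balls B(a_j, p^{−n_j}) (a_j ∈ ℚ_p, n_j ∈ ℤ), each of which is maximal in U, i.e., B(a_j, p^{−n_j}) is not contained in any closed ball B′ with B(a_j, p^{−n_j}) ⊊ B′ ⊆ U. Equivalently, for each x ∈ U the union of all closed balls B with x ∈ B ⊆ U is itself a closed ball (the largest ball centered at x contained in U), and these balls, as x ranges over U, form an at most countable partition of U. -/

import Mathlib

open Metric IsUltrametricDist

/-- Every nonempty bounded open subset `U` of `ℚ_p` is the union of an at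
most countable family of pairwise disjoint closed balls `B(a_j, p^{-n_j})`, each of which is
maximal in `U`: no closed ball `B'` satisfies `B(a_j, p^{-n_j}) ⊊ B' ⊆ U`. -/
theorem padic_open_set_decomposition (p : ℕ) [Fact p.Prime]
    (U : Set ℚ_[p]) (hne : U.Nonempty) (hU : IsOpen U) (hb : Bornology.IsBounded U) :
    ∃ (ι : Type) (_ : Countable ι) (a : ι → ℚ_[p]) (n : ι → ℤ),
      (⋃ j, Metric.closedBall (a j) ((p : ℝ) ^ (-n j))) = U
        ∧ (Pairwise fun i j =>
            Disjoint (Metric.closedBall (a i) ((p : ℝ) ^ (-n i)))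
              (Metric.closedBall (a j) ((p : ℝ) ^ (-n j))))
        ∧ ∀ j, ¬∃ (b : ℚ_[p]) (r : ℝ), 0 < r ∧
            Metric.closedBall (a j) ((p : ℝ) ^ (-n j)) ⊂ Metric.closedBall b r ∧
            Metric.closedBall b r ⊆ U := by
  classical
  have hp1 : (1 : ℝ) < p := by exact_mod_cast (Fact.out : p.Prime).one_lt
  have hp0 : (0 : ℝ) < p := lt_trans one_pos hp1
  obtain ⟨R, hR⟩ := hb.subset_closedBall 0
  -- existence of a least `n` with `closedBall x (p^(-n)) ⊆ U`, for every `x ∈ U`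
  have hmin : ∀ x ∈ U, ∃ m : ℤ, Metric.closedBall x ((p : ℝ) ^ (-m)) ⊆ U ∧
      ∀ k : ℤ, Metric.closedBall x ((p : ℝ) ^ (-k)) ⊆ U → m ≤ k := by
    intro x hx
    obtain ⟨M, hM⟩ := pow_unbounded_of_one_lt (2 * R) hp1
    have hbdd : ∃ b : ℤ, ∀ z : ℤ, Metric.closedBall x ((p : ℝ) ^ (-z)) ⊆ U → b ≤ z := by
      refine ⟨-(M : ℤ), fun z hz => ?_⟩
      have hnp : ‖(p : ℚ_[p]) ^ z‖ = (p : ℝ) ^ (-z) := by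
        rw [norm_zpow, Padic.norm_p, inv_zpow, ← zpow_neg]
      have hy : x + (p : ℚ_[p]) ^ z ∈ Metric.closedBall x ((p : ℝ) ^ (-z)) := by
        simp [Metric.mem_closedBall, dist_eq_norm, hnp]
      have h1 : x ∈ Metric.closedBall (0 : ℚ_[p]) R := hR hx
      have h2 : x + (p : ℚ_[p]) ^ z ∈ Metric.closedBall (0 : ℚ_[p]) R := hR (hz hy)
      have hd : dist x (x + (p : ℚ_[p]) ^ z) ≤ 2 * R := by
        have := dist_triangle x (0 : ℚ_[p]) (x + (p : ℚ_[p]) ^ z)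
        rw [Metric.mem_closedBall] at h1 h2
        rw [dist_comm (0 : ℚ_[p])] at this
        linarith
      have hdist : dist x (x + (p : ℚ_[p]) ^ z) = (p : ℝ) ^ (-z) := by
        simp [dist_eq_norm, hnp]
      have hlt : (p : ℝ) ^ (-z) < (p : ℝ) ^ (M : ℤ) := by
        calc (p : ℝ) ^ (-z) = dist x (x + (p : ℚ_[p]) ^ z) := hdist.symm
        _ ≤ 2 * R := hd
        _ < (p : ℝ) ^ M := hM
        _ = (p : ℝ) ^ (M : ℤ) := (zpow_natCast _ _).symm
      have := (zpow_lt_zpow_iff_right₀ hp1).mp hlt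
      omega
    have hinh : ∃ z : ℤ, Metric.closedBall x ((p : ℝ) ^ (-z)) ⊆ U := by
      obtain ⟨ε, hε, hball⟩ := Metric.isOpen_iff.mp hU x hx
      obtain ⟨N, hN⟩ : ∃ N : ℕ, ((p : ℝ)⁻¹) ^ N < ε :=
        exists_pow_lt_of_lt_one hε (by rw [inv_lt_one_iff₀]; right; exact hp1)
      refine ⟨(N : ℤ), subset_trans (Metric.closedBall_subset_ball ?_) hball⟩
      calc (p : ℝ) ^ (-(N : ℤ)) = ((p : ℝ)⁻¹) ^ N := by
            rw [zpow_neg, ← inv_zpow, zpow_natCast]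
        _ < ε := hN
    exact Int.exists_least_of_bdd hbdd hinh
  choose m hm1 hm2 using hmin
  -- the canonical ball attached to a point of `U`
  set F : U → Set ℚ_[p] := fun x => Metric.closedBall x.1 ((p : ℝ) ^ (-(m x.1 x.2)))
    with hFdef
  have hFU : ∀ x : U, F x ⊆ U := fun x => hm1 x.1 x.2
  have hFpos : ∀ x : U, (0 : ℝ) < (p : ℝ) ^ (-(m x.1 x.2)) := fun x => zpow_pos hp0 _
  have hFself : ∀ x : U, x.1 ∈ F x := fun x => Metric.mem_closedBall_self (hFpos x).le
  -- key: two canonical balls are equal or disjoint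
  have key : ∀ x y : U, (F x ∩ F y).Nonempty → F x = F y := by
    have main : ∀ x y : U, F x ⊆ F y → F x = F y := by
      intro x y hss
      have hx' : x.1 ∈ Metric.closedBall y.1 ((p : ℝ) ^ (-(m y.1 y.2))) := hss (hFself x)
      have heq : Metric.closedBall y.1 ((p : ℝ) ^ (-(m y.1 y.2)))
          = Metric.closedBall x.1 ((p : ℝ) ^ (-(m y.1 y.2))) :=
        IsUltrametricDist.closedBall_eq_of_mem hx'
      have hPx : Metric.closedBall x.1 ((p : ℝ) ^ (-(m y.1 y.2))) ⊆ U := by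
        rw [← heq]; exact hFU y
      have hle : m x.1 x.2 ≤ m y.1 y.2 := hm2 x.1 x.2 _ hPx
      have hsub2 : F y ⊆ F x := by
        show Metric.closedBall y.1 ((p : ℝ) ^ (-(m y.1 y.2)))
          ⊆ Metric.closedBall x.1 ((p : ℝ) ^ (-(m x.1 x.2)))
        rw [heq]
        exact Metric.closedBall_subset_closedBall (zpow_le_zpow_right₀ hp1.le (by omega))
      exact le_antisymm hss hsub2
    intro x y hnon
    rcases IsUltrametricDist.closedBall_subset_trichotomy x.1 y.1
        ((p : ℝ) ^ (-(m x.1 x.2))) ((p : ℝ) ^ (-(m y.1 y.2))) with h | h | h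
    · exact main x y h
    · exact (main y x h).symm
    · exact absurd hnon (Set.not_nonempty_iff_eq_empty.mpr (Set.disjoint_iff_inter_eq_empty.mp h))
  -- choose representatives for each canonical ball
  have pick : ∀ j : ↥(Set.range F), ∃ x : U, F x = j.1 := fun j => j.2
  choose xj hxj using pick
  refine ⟨↥(Set.range F), ?_, fun j => (xj j).1, fun j => m (xj j).1 (xj j).2, ?_, ?_, ?_⟩
  · -- countability
    refine Pairwise.countable_of_isOpen_disjoint
      (s := fun j : ↥(Set.range F) => (j : Set ℚ_[p])) ?_ ?_ ?_
    · intro i j hij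
      rw [Function.onFun]
      by_contra hdis
      rw [Set.not_disjoint_iff_nonempty_inter] at hdis
      rw [← hxj i, ← hxj j] at hdis
      exact hij (Subtype.ext (by rw [← hxj i, ← hxj j, key _ _ hdis]))
    · intro j
      show IsOpen (j.1)
      rw [← hxj j]
      exact IsUltrametricDist.isOpen_closedBall _ (ne_of_gt (hFpos (xj j)))
    · intro j
      show (j.1).Nonempty
      rw [← hxj j]
      exact ⟨_, hFself (xj j)⟩
  · -- union equals U
    apply le_antisymm
    · exact Set.iUnion_subset fun j => hFU (xj j)
    · intro x hx
      refine Set.mem_iUnion.mpr ⟨⟨F ⟨x, hx⟩, Set.mem_range_self _⟩, ?_⟩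
      show x ∈ F (xj _)
      rw [hxj ⟨F ⟨x, hx⟩, Set.mem_range_self _⟩]
      exact hFself ⟨x, hx⟩
  · -- pairwise disjoint
    intro i j hij
    by_contra hdis
    rw [Set.not_disjoint_iff_nonempty_inter] at hdis
    have hdis' : (F (xj i) ∩ F (xj j)).Nonempty := hdis
    have heq := key _ _ hdis'
    exact hij (Subtype.ext (by rw [← hxj i, ← hxj j, heq]))
  · -- maximality
    rintro j ⟨b, r, hr, hss, hsub⟩
    set x : U := xj j with hxdef
    have hx' : x.1 ∈ Metric.closedBall b r :=
      hss.1 (Metric.mem_closedBall_self (hFpos x).le)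
    have heq : Metric.closedBall b r = Metric.closedBall x.1 r :=
      IsUltrametricDist.closedBall_eq_of_mem hx'
    obtain ⟨y, hy1, hy2⟩ := Set.exists_of_ssubset hss
    rw [heq, Metric.mem_closedBall] at hy1
    rw [Metric.mem_closedBall, not_le] at hy2
    have hyne : y - x.1 ≠ 0 := by
      intro h
      rw [sub_eq_zero] at h
      rw [h] at hy2
      simp only [hxdef, dist_self] at hy2
      exact absurd hy2 (not_lt.mpr (hFpos x).le)
    set k : ℤ := (y - x.1).valuation with hk
    have hnorm : dist y x.1 = (p : ℝ) ^ (-k) := by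
      rw [dist_eq_norm, Padic.norm_eq_zpow_neg_valuation hyne]
    have hkr : (p : ℝ) ^ (-k) ≤ r := hnorm ▸ hy1
    have hkm : (p : ℝ) ^ (-(m x.1 x.2)) < (p : ℝ) ^ (-k) := by
      rw [← hnorm]
      exact hy2
    have hklt : k < m x.1 x.2 := by
      have := (zpow_lt_zpow_iff_right₀ hp1).mp hkm
      omega
    have hPk : Metric.closedBall x.1 ((p : ℝ) ^ (-k)) ⊆ U := by
      refine subset_trans ?_ hsub
      rw [heq]
      exact Metric.closedBall_subset_closedBall hkr
    have := hm2 x.1 x.2 k hPk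
    omega
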